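/- Let π = (π₁,…,π_n) and σ = (σ₁,…,σ_m) be curves in ℝ^d equipped with the L₁ norm, and let f(τ) := d_DTW(π, σ+τ). Then there exists a translation τ* ∈ ℝ^d with τ*_k ∈ {π_i[k] − σ_j[k] : i ∈ [n], j ∈ [m]} for every coordinate k ∈ [d], such that f(τ*) ≤ f(τ) for all τ ∈ ℝ^d; in particular the infimum inf_{τ ∈ ℝ^d} f(τ) is attained at a point of this finite candidate set. -/

import Mathlib

open Finset

/-- A traversal of two curves of lengths `n` and `m` (1-indexed): a nonempty list of
index pairs starting at `(1,1)`, ending at `(n,m)`, where each step increases the first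
index, the second index, or both, by one. -/
def IsTraversal (n m : ℕ) (T : List (ℕ × ℕ)) : Prop :=
  T.head? = some (1, 1) ∧ T.getLast? = some (n, m) ∧
  ∀ ℓ : ℕ, ℓ + 1 < T.length →
    T.getD (ℓ + 1) (0, 0) = ((T.getD ℓ (0, 0)).1 + 1, (T.getD ℓ (0, 0)).2) ∨
    T.getD (ℓ + 1) (0, 0) = ((T.getD ℓ (0, 0)).1, (T.getD ℓ (0, 0)).2 + 1) ∨
    T.getD (ℓ + 1) (0, 0) = ((T.getD ℓ (0, 0)).1 + 1, (T.getD ℓ (0, 0)).2 + 1)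

/-- The `L₁` norm on `ℝ^d`. -/
def l1norm {d : ℕ} (x : Fin d → ℝ) : ℝ := ∑ k, |x k|

/-- The dynamic time warping distance, with respect to the `L₁` norm on `ℝ^d`, of two
curves `π = (π 1, …, π n)` and `σ = (σ 1, …, σ m)`: the minimum, over all traversals, of
the sum of the `L₁` distances of the paired points. -/
noncomputable def dtwL1 {d : ℕ} (n m : ℕ) (π σ : ℕ → Fin d → ℝ) : ℝ :=
  sInf {c : ℝ | ∃ T : List (ℕ × ℕ), IsTraversal n m T ∧
    (T.map fun p => l1norm (π p.1 - σ p.2)).sum = c}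

lemma l1norm_nonneg {d : ℕ} (x : Fin d → ℝ) : 0 ≤ l1norm x :=
  Finset.sum_nonneg fun _ _ => abs_nonneg _

lemma list_sum_map_finset_sum {α : Type*} {d : ℕ} (a : List α) (g : α → Fin d → ℝ) :
    (a.map fun p => ∑ k, g p k).sum = ∑ k, (a.map fun p => g p k).sum := by
  induction a with
  | nil => simp
  | cons x l ih => simp [ih, Finset.sum_add_distrib]

lemma median_right {L : ℕ} (A : Fin L → ℝ) (t : ℝ) (hpos : 0 < L)
    (hne : ∀ j, A j ≠ t)
    (hcount : (univ.filter fun j => A j < t).card ≤ (univ.filter fun j => t < A j).card) :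
    ∃ i : Fin L, (∑ j, |A j - A i|) ≤ ∑ j, |A j - t| := by
  classical
  have hPc : univ.filter (fun j : Fin L => ¬ A j < t) = univ.filter (fun j => t < A j) := by
    apply Finset.filter_congr
    intro j _
    constructor
    · intro h; exact (not_lt.1 (by simpa using h)).lt_of_ne (hne j).symm
    · intro h; simpa using not_lt.2 (le_of_lt (by simpa using h))
  have hsplit := Finset.card_filter_add_card_filter_not (s := (univ : Finset (Fin L)))
    (p := fun j => A j < t)
  rw [hPc] at hsplit
  simp only [Finset.card_univ, Fintype.card_fin] at hsplit
  have hQne : (univ.filter fun j : Fin L => t < A j).Nonempty :=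
    Finset.card_pos.1 (by omega)
  obtain ⟨i, hiQ, hmin⟩ := Finset.exists_min_image _ A hQne
  have hti : t < A i := (Finset.mem_filter.1 hiQ).2
  refine ⟨i, ?_⟩
  have h1 : ∀ j ∈ univ.filter (fun j : Fin L => A j < t),
      |A j - A i| = (A i - t) + |A j - t| := by
    intro j hj
    have hjt : A j < t := (Finset.mem_filter.1 hj).2
    rw [abs_of_nonpos (by linarith), abs_of_nonpos (by linarith)]; ring
  have h2 : ∀ j ∈ univ.filter (fun j : Fin L => ¬ A j < t),
      |A j - A i| = |A j - t| - (A i - t) := by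
    intro j hj
    rw [hPc] at hj
    have hjt : t < A j := (Finset.mem_filter.1 hj).2
    have hij : A i ≤ A j := hmin j (Finset.mem_filter.2 ⟨Finset.mem_univ _, hjt⟩)
    rw [abs_of_nonneg (by linarith), abs_of_nonneg (by linarith)]; ring
  have hsum := (Finset.sum_filter_add_sum_filter_not univ (fun j : Fin L => A j < t)
      (fun j => |A j - A i|)).symm
  have hsumT := (Finset.sum_filter_add_sum_filter_not univ (fun j : Fin L => A j < t)
      (fun j => |A j - t|)).symm
  rw [hPc] at hsum hsumT
  have e1 : ∑ x ∈ univ.filter (fun j : Fin L => A j < t), |A x - A i|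
      = ∑ x ∈ univ.filter (fun j : Fin L => A j < t), |A x - t|
        + ((univ.filter fun j : Fin L => A j < t).card : ℝ) * (A i - t) := by
    rw [Finset.sum_congr rfl h1, Finset.sum_add_distrib, Finset.sum_const, nsmul_eq_mul]
    ring
  have e2 : ∑ x ∈ univ.filter (fun j : Fin L => t < A j), |A x - A i|
      = ∑ x ∈ univ.filter (fun j : Fin L => t < A j), |A x - t|
        - ((univ.filter fun j : Fin L => t < A j).card : ℝ) * (A i - t) := by
    have h2' : ∀ j ∈ univ.filter (fun j : Fin L => t < A j),
        |A j - A i| = |A j - t| - (A i - t) := by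
      intro j hj; exact h2 j (by rwa [hPc])
    rw [Finset.sum_congr rfl h2', Finset.sum_sub_distrib, Finset.sum_const, nsmul_eq_mul]
  have hcard : ((univ.filter fun j : Fin L => A j < t).card : ℝ) * (A i - t)
      ≤ ((univ.filter fun j : Fin L => t < A j).card : ℝ) * (A i - t) := by
    apply mul_le_mul_of_nonneg_right _ (by linarith)
    exact_mod_cast hcount
  rw [hsum, hsumT, e1, e2]
  linarith

lemma median_fin {L : ℕ} (hpos : 0 < L) (A : Fin L → ℝ) (t : ℝ) :
    ∃ i : Fin L, (∑ j, |A j - A i|) ≤ ∑ j, |A j - t| := by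
  classical
  by_cases hex : ∃ j, A j = t
  · obtain ⟨j, hj⟩ := hex
    exact ⟨j, le_of_eq (by rw [hj])⟩
  · push_neg at hex
    rcases le_total ((univ.filter fun j : Fin L => A j < t).card)
        ((univ.filter fun j : Fin L => t < A j).card) with h | h
    · exact median_right A t hpos hex h
    · obtain ⟨i, hi⟩ := median_right (fun j => -A j) (-t) hpos
        (fun j h' => hex j (by linarith [neg_eq_iff_eq_neg.1 h']))
        (by simp only [neg_lt_neg_iff]; exact h)
      refine ⟨i, ?_⟩
      have e1 : ∀ a b : ℝ, |(-a) - (-b)| = |a - b| := by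
        intro a b; rw [← abs_neg]; ring_nf
      simp only [e1] at hi
      exact hi

lemma median_list (a : List ℝ) (ha : a ≠ []) (t : ℝ) :
    ∃ s ∈ a, (a.map fun x => |x - s|).sum ≤ (a.map fun x => |x - t|).sum := by
  have hpos : 0 < a.length := List.length_pos_iff.2 ha
  obtain ⟨i, hi⟩ := median_fin hpos (fun j : Fin a.length => a[j.1]) t
  refine ⟨a[i.1], List.getElem_mem i.2, ?_⟩
  rw [← Fin.sum_univ_fun_getElem a (fun x => |x - a[i.1]|), ← Fin.sum_univ_fun_getElem a (fun x => |x - t|)]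
  exact hi

lemma isTraversal_ne_nil {n m : ℕ} {T : List (ℕ × ℕ)} (h : IsTraversal n m T) : T ≠ [] := by
  intro h0
  rw [h0] at h
  exact absurd h.1 (by simp)

lemma stairs_get (n m ℓ : ℕ) (h : ℓ < n + (m - 1)) :
    (((List.range n).map fun i => (i+1, 1)) ++
      ((List.range (m-1)).map fun j => (n, j+2)))[ℓ]'(by simpa using h)
      = if ℓ < n then (ℓ + 1, 1) else (n, ℓ - n + 2) := by
  by_cases hℓ : ℓ < n
  · rw [List.getElem_append_left (by simpa using hℓ)]
    simp [hℓ]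
  · rw [List.getElem_append_right (by simp; omega)]
    simp only [List.getElem_map, List.getElem_range, List.length_map, List.length_range]
    rw [if_neg hℓ]

lemma exists_traversal (n m : ℕ) (hn : 1 ≤ n) (hm : 1 ≤ m) :
    ∃ T : List (ℕ × ℕ), IsTraversal n m T := by
  refine ⟨((List.range n).map fun i => (i+1, 1)) ++ ((List.range (m-1)).map fun j => (n, j+2)),
    ?_, ?_, ?_⟩ <;>
  · set T : List (ℕ × ℕ) :=
      ((List.range n).map fun i => (i+1, 1)) ++ ((List.range (m-1)).map fun j => (n, j+2))
      with hT
    have hlen : T.length = n + (m - 1) := by simp [hT]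
    have hget : ∀ ℓ (h : ℓ < T.length),
        T[ℓ] = if ℓ < n then (ℓ + 1, 1) else (n, ℓ - n + 2) := by
      intro ℓ h
      exact stairs_get n m ℓ (by omega)
    have hD : ∀ ℓ (h : ℓ < T.length),
        T.getD ℓ (0,0) = if ℓ < n then (ℓ + 1, 1) else (n, ℓ - n + 2) := by
      intro ℓ h
      rw [List.getD_eq_getElem T (0,0) h, hget ℓ h]
    first
    | · have h0 : 0 < T.length := by omega
        rw [List.head?_eq_getElem?, List.getElem?_eq_getElem h0, hget 0 h0,
          if_pos (by omega : 0 < n)]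
    | · have h0 : T.length - 1 < T.length := by omega
        rw [List.getLast?_eq_getElem?, List.getElem?_eq_getElem h0, hget _ h0, hlen]
        rcases Nat.lt_or_ge (n + (m-1) - 1) n with h1 | h1
        · rw [if_pos h1]
          have hm1 : m = 1 := by omega
          have : n + (m - 1) - 1 + 1 = n := by omega
          rw [this, hm1]
        · rw [if_neg (by omega)]
          have : n + (m - 1) - 1 - n + 2 = m := by omega
          rw [this]
    | · intro ℓ hℓ
        have hℓ' : ℓ < T.length := by omega
        rw [hD _ hℓ, hD _ hℓ']
        rw [hlen] at hℓ
        by_cases h1 : ℓ + 1 < n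
        · rw [if_pos h1, if_pos (by omega)]
          left; rfl
        · by_cases h2 : ℓ < n
          · rw [if_neg h1, if_pos h2]
            right; left
            simp only [Prod.mk.injEq]
            omega
          · rw [if_neg h1, if_neg h2]
            right; left
            refine Prod.ext rfl ?_
            show ℓ + 1 - n + 2 = (ℓ - n + 2) + 1
            omega

lemma isTraversal_bounds {n m : ℕ} {T : List (ℕ × ℕ)} (h : IsTraversal n m T) :
    ∀ p ∈ T, p.1 ∈ Finset.Icc 1 n ∧ p.2 ∈ Finset.Icc 1 m := by
  obtain ⟨h1, h2, h3⟩ := h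
  have hne : T ≠ [] := by intro h0; rw [h0] at h1; exact absurd h1 (by simp)
  have hL : 0 < T.length := List.length_pos_iff.2 hne
  have hu0 : T.getD 0 (0,0) = (1,1) := by
    rw [List.getD_eq_getElem T _ hL]
    rw [List.head?_eq_getElem?, List.getElem?_eq_getElem hL] at h1
    exact Option.some.inj h1
  have huL : T.getD (T.length - 1) (0,0) = (n, m) := by
    have hl : T.length - 1 < T.length := by omega
    rw [List.getD_eq_getElem T _ hl]
    rw [List.getLast?_eq_getElem?, List.getElem?_eq_getElem hl] at h2
    exact Option.some.inj h2
  have mono : ∀ b, b < T.length → ∀ a, a ≤ b →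
      (T.getD a (0,0)).1 ≤ (T.getD b (0,0)).1 ∧ (T.getD a (0,0)).2 ≤ (T.getD b (0,0)).2 := by
    intro b
    induction b with
    | zero =>
      intro _ a ha
      interval_cases a
      exact ⟨le_refl _, le_refl _⟩
    | succ b ih =>
      intro hb a ha
      rcases Nat.lt_or_ge a (b+1) with h' | h'
      · have hab : a ≤ b := by omega
        have hb' : b < T.length := by omega
        obtain ⟨m1, m2⟩ := ih hb' a hab
        have step : (T.getD b (0,0)).1 ≤ (T.getD (b+1) (0,0)).1 ∧
            (T.getD b (0,0)).2 ≤ (T.getD (b+1) (0,0)).2 := by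
          rcases h3 b hb with hs | hs | hs
          · rw [hs]; exact ⟨Nat.le_succ _, Nat.le_refl _⟩
          · rw [hs]; exact ⟨Nat.le_refl _, Nat.le_succ _⟩
          · rw [hs]; exact ⟨Nat.le_succ _, Nat.le_succ _⟩
        exact ⟨le_trans m1 step.1, le_trans m2 step.2⟩
      · have haeq : a = b + 1 := by omega
        subst haeq
        exact ⟨le_refl _, le_refl _⟩
  intro p hp
  obtain ⟨ℓ, hℓ, rfl⟩ := List.mem_iff_getElem.1 hp
  have hDℓ : T.getD ℓ (0,0) = T[ℓ] := List.getD_eq_getElem T _ hℓ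
  have l1 := mono ℓ hℓ 0 (Nat.zero_le _)
  have l2 := mono (T.length - 1) (by omega) ℓ (by omega)
  rw [hu0] at l1
  rw [huL] at l2
  rw [hDℓ] at l1 l2
  exact ⟨Finset.mem_Icc.2 ⟨l1.1, l2.1⟩, Finset.mem_Icc.2 ⟨l1.2, l2.2⟩⟩

/-- For the `L₁` norm on `ℝ^d`, the function `f(τ) = d_DTW(π, σ + τ)` attains a global
minimum at some translation `τ*` each of whose coordinates is of the form
`π_i[k] - σ_j[k]` for some `i ∈ [n]`, `j ∈ [m]`. -/
theorem dtwL1_min_on_candidate_grid (d n m : ℕ) (hd : 1 ≤ d) (hn : 1 ≤ n) (hm : 1 ≤ m)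
    (π σ : ℕ → Fin d → ℝ) :
    ∃ τs : Fin d → ℝ,
      (∀ k : Fin d, ∃ i ∈ Finset.Icc 1 n, ∃ j ∈ Finset.Icc 1 m, τs k = π i k - σ j k) ∧
      ∀ τ : Fin d → ℝ, dtwL1 n m π (fun j => σ j + τs) ≤ dtwL1 n m π (fun j => σ j + τ) := by
  classical
  set Cand : Fin d → Finset ℝ :=
    fun k => ((Finset.Icc 1 n) ×ˢ (Finset.Icc 1 m)).image fun p => π p.1 k - σ p.2 k with hCand
  set G : Finset (Fin d → ℝ) := Fintype.piFinset Cand with hG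
  have hGne : G.Nonempty := by
    refine ⟨fun k => π 1 k - σ 1 k, ?_⟩
    rw [hG, Fintype.mem_piFinset]
    intro k
    exact Finset.mem_image.2 ⟨(1,1), Finset.mem_product.2
      ⟨Finset.mem_Icc.2 ⟨le_refl _, hn⟩, Finset.mem_Icc.2 ⟨le_refl _, hm⟩⟩, rfl⟩
  obtain ⟨τs, hτsG, hτsmin⟩ :=
    Finset.exists_min_image G (fun τ => dtwL1 n m π (fun j => σ j + τ)) hGne
  have hτsC : ∀ k, τs k ∈ Cand k := Fintype.mem_piFinset.1 (by rwa [hG] at hτsG)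
  refine ⟨τs, ?_, ?_⟩
  · intro k
    obtain ⟨p, hp, he⟩ := Finset.mem_image.1 (hτsC k)
    obtain ⟨hp1, hp2⟩ := Finset.mem_product.1 hp
    exact ⟨p.1, hp1, p.2, hp2, he.symm⟩
  · intro τ
    have hbdd : ∀ τ' : Fin d → ℝ, BddBelow {c : ℝ | ∃ T : List (ℕ × ℕ), IsTraversal n m T ∧
        (T.map fun p => l1norm (π p.1 - (fun j => σ j + τ') p.2)).sum = c} := by
      intro τ'
      refine ⟨0, fun c hc => ?_⟩
      obtain ⟨T, _, rfl⟩ := hc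
      apply List.sum_nonneg
      intro x hx
      obtain ⟨p, _, rfl⟩ := List.mem_map.1 hx
      exact l1norm_nonneg _
    have hSne : ∀ τ' : Fin d → ℝ, Set.Nonempty {c : ℝ | ∃ T : List (ℕ × ℕ), IsTraversal n m T ∧
        (T.map fun p => l1norm (π p.1 - (fun j => σ j + τ') p.2)).sum = c} := by
      intro τ'
      obtain ⟨T, hT⟩ := exists_traversal n m hn hm
      exact ⟨_, T, hT, rfl⟩
    have costeq : ∀ (τ' : Fin d → ℝ) (T : List (ℕ × ℕ)),
        (T.map fun p => l1norm (π p.1 - (fun j => σ j + τ') p.2)).sum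
        = ∑ k, ((T.map (fun p => π p.1 k - σ p.2 k)).map fun x => |x - τ' k|).sum := by
      intro τ' T
      have e1 : (T.map fun p => l1norm (π p.1 - (fun j => σ j + τ') p.2))
          = (T.map fun p => ∑ k, |(π p.1 k - σ p.2 k) - τ' k|) := by
        apply List.map_congr_left
        intro p _
        simp only [l1norm, Pi.sub_apply, Pi.add_apply, sub_add_eq_sub_sub]
      rw [e1, list_sum_map_finset_sum]
      refine Finset.sum_congr rfl fun k _ => ?_
      rw [List.map_map]
      rfl
    show dtwL1 n m π (fun j => σ j + τs) ≤ dtwL1 n m π (fun j => σ j + τ)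
    unfold dtwL1
    refine le_csInf (hSne τ) ?_
    rintro c ⟨T, hT, rfl⟩
    have hTne : T ≠ [] := isTraversal_ne_nil hT
    have hmed : ∀ k : Fin d, ∃ s ∈ T.map (fun p => π p.1 k - σ p.2 k),
        ((T.map (fun p => π p.1 k - σ p.2 k)).map fun x => |x - s|).sum ≤
        ((T.map (fun p => π p.1 k - σ p.2 k)).map fun x => |x - τ k|).sum :=
      fun k => median_list _ (by simpa using hTne) (τ k)
    choose s hs hsle using hmed
    have hsG : s ∈ G := by
      rw [hG, Fintype.mem_piFinset]
      intro k
      obtain ⟨p, hpT, he⟩ := List.mem_map.1 (hs k)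
      obtain ⟨hb1, hb2⟩ := isTraversal_bounds hT p hpT
      exact Finset.mem_image.2 ⟨(p.1, p.2), Finset.mem_product.2 ⟨hb1, hb2⟩, he⟩
    have step1 : dtwL1 n m π (fun j => σ j + τs) ≤ dtwL1 n m π (fun j => σ j + s) :=
      hτsmin s hsG
    have step2 : dtwL1 n m π (fun j => σ j + s)
        ≤ (T.map fun p => l1norm (π p.1 - (fun j => σ j + s) p.2)).sum := by
      unfold dtwL1
      exact csInf_le (hbdd s) ⟨T, hT, rfl⟩
    have step3 : (T.map fun p => l1norm (π p.1 - (fun j => σ j + s) p.2)).sum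
        ≤ (T.map fun p => l1norm (π p.1 - (fun j => σ j + τ) p.2)).sum := by
      rw [costeq s T, costeq τ T]
      exact Finset.sum_le_sum fun k _ => hsle k
    calc sInf {c : ℝ | ∃ T : List (ℕ × ℕ), IsTraversal n m T ∧
        (T.map fun p => l1norm (π p.1 - (fun j => σ j + τs) p.2)).sum = c}
        = dtwL1 n m π (fun j => σ j + τs) := rfl
      _ ≤ _ := le_trans step1 (le_trans step2 step3)
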